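/- Let X_1, ..., X_n be points on the boundary of a convex body K \subset R^d, and suppose the \sigma-surface body K_\sigma^\tau is contained in the convex hull [X_2, ..., X_n]. Then \Delta(X_1, [X_2,...,X_n]) := conv([X_2,...,X_n] \cup {X_1}) \setminus [X_2,...,X_n] is contained in the visibility region Vis_\sigma(X_1, \tau). -/

import Mathlib

open MeasureTheory RealInnerProductSpace Set

/-- The `σ`-surface body `K_σ^t`: the intersection of all closed half-spaces
`H⁺ = {y : ⟪y,u⟫ ≤ c}` (for `u ≠ 0`) whose complementary half-space
`H⁻ = {y : ⟪y,u⟫ ≥ c}` cuts off `σ`-measure at most `t` from `∂K`. -/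
def surfaceBody {d : ℕ} (K : Set (EuclideanSpace ℝ (Fin d)))
    (σ : Measure (EuclideanSpace ℝ (Fin d))) (t : ℝ) : Set (EuclideanSpace ℝ (Fin d)) :=
  ⋂ (u : EuclideanSpace ℝ (Fin d)) (c : ℝ) (_ : u ≠ 0)
    (_ : σ (frontier K ∩ {y | c ≤ ⟪y, u⟫}) ≤ ENNReal.ofReal t),
    {y | ⟪y, u⟫ ≤ c}

/-- The visibility region of `z ∈ ∂K`: all points of `K \ K_σ^τ` visible from `z` around
the obstacle `K_σ^τ`. -/
def visRegion {d : ℕ} (K : Set (EuclideanSpace ℝ (Fin d)))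
    (σ : Measure (EuclideanSpace ℝ (Fin d))) (τ : ℝ) (z : EuclideanSpace ℝ (Fin d)) :
    Set (EuclideanSpace ℝ (Fin d)) :=
  {y | y ∈ K \ surfaceBody K σ τ ∧ segment ℝ z y ∩ surfaceBody K σ τ = ∅}

/-- If the surface body `K_σ^τ` is contained in the convex hull of
`X 2, ..., X n`, then `Δ(X 1, [X 2,...,X n]) = conv([X 2,...,X n] ∪ {X 1}) \ [X 2,...,X n]`
is contained in the visibility region `Vis_σ(X 1, τ)`. -/
theorem wet_part_subset_visRegion {d : ℕ}
    (K : Set (EuclideanSpace ℝ (Fin d))) (hKcomp : IsCompact K) (hKconv : Convex ℝ K)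
    (σ : Measure (EuclideanSpace ℝ (Fin d))) [IsProbabilityMeasure σ]
    (hσsupp : σ (frontier K)ᶜ = 0)
    (τ : ℝ) (hτ : τ ∈ Set.Ioo (0 : ℝ) 1)
    (n : ℕ) (X : Fin (n + 1) → EuclideanSpace ℝ (Fin d))
    (hX : ∀ i, X i ∈ frontier K)
    (hsb : surfaceBody K σ τ ⊆ convexHull ℝ (Set.range (X ∘ Fin.succ))) :
    convexHull ℝ (convexHull ℝ (Set.range (X ∘ Fin.succ)) ∪ {X 0}) \
        convexHull ℝ (Set.range (X ∘ Fin.succ))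
      ⊆ visRegion K σ τ (X 0) := by
  classical
  set L := convexHull ℝ (Set.range (X ∘ Fin.succ)) with hLdef
  have hLconv : Convex ℝ L := convex_convexHull _ _
  have hfr : frontier K ⊆ K := hKcomp.isClosed.frontier_subset
  have hLK : L ⊆ K := convexHull_min (by rintro x ⟨i, rfl⟩; exact hfr (hX _)) hKconv
  intro y hy
  obtain ⟨hy1, hy2⟩ := hy
  have hyK : y ∈ K := by
    refine convexHull_min (Set.union_subset hLK ?_) hKconv hy1
    simp only [Set.singleton_subset_iff]
    exact hfr (hX 0)
  have hynsb : y ∉ surfaceBody K σ τ := fun h => hy2 (hsb h)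
  refine ⟨⟨hyK, hynsb⟩, ?_⟩
  rcases (Set.range (X ∘ Fin.succ)).eq_empty_or_nonempty with hE | hE
  · have hLe : L = ∅ := by rw [hLdef, hE, convexHull_empty]
    have : surfaceBody K σ τ = ∅ := Set.subset_eq_empty hsb hLe
    rw [this, Set.inter_empty]
  · -- get p ∈ L with y ∈ segment (X 0) p
    have hins : convexHull ℝ (L ∪ {X 0}) = convexJoin ℝ {X 0} L := by
      rw [Set.union_comm, ← Set.insert_eq, convexHull_insert (hE.convexHull),
        hLconv.convexHull_eq]
    rw [hins, mem_convexJoin] at hy1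
    obtain ⟨x0, hx0, p, hp, hyseg⟩ := hy1
    rw [Set.mem_singleton_iff] at hx0
    subst hx0
    rw [segment_eq_image'] at hyseg
    obtain ⟨v, ⟨hv0, hv1⟩, hyv⟩ := hyseg
    rw [Set.eq_empty_iff_forall_notMem]
    rintro w ⟨hw1, hw2⟩
    have hwL : w ∈ L := hsb hw2
    rw [segment_eq_image'] at hw1
    obtain ⟨s, ⟨hs0, hs1⟩, hws⟩ := hw1
    -- w = X0 + (s*v) • (p - X0)
    have hw : w = X 0 + (s * v) • (p - X 0) := by
      rw [← hws, ← hyv]; module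
    set u := s * v with hu
    have hu0 : 0 ≤ u := mul_nonneg hs0 hv0
    have huv : u ≤ v := by
      calc u = s * v := rfl
        _ ≤ 1 * v := by exact mul_le_mul_of_nonneg_right hs1 hv0
        _ = v := one_mul v
    rcases eq_or_lt_of_le huv with huv' | huv'
    · -- y = w ∈ L, contradiction
      apply hy2
      have : y = w := by rw [hw, ← hyv, huv']
      rw [this]; exact hwL
    · have hu1 : u < 1 := lt_of_lt_of_le huv' hv1
      have h1u : (1 : ℝ) - u ≠ 0 := by linarith
      have hyL : y ∈ segment ℝ w p := by
        refine ⟨(1 - v) / (1 - u), (v - u) / (1 - u), ?_, ?_, ?_, ?_⟩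
        · apply div_nonneg <;> linarith
        · apply div_nonneg <;> linarith
        · field_simp; ring
        · rw [hw, ← hyv]
          match_scalars <;> field_simp <;> ring
      exact hy2 (hLconv.segment_subset hwL hp hyL)
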